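/- Fix a natural number k. Then lim_{d→∞} ∑_{i=0}^{d} (k + i) · 2^{−i} · ∏_{j=i+1}^{d} (1 − 2^{−j}) = k + c₀, where c₀ = ∑_{i=1}^{∞} 1/(2^i − 1) is the Erdős–Borwein constant. (With d = n − k, the sum is the expected value E[M_n] of the number M_n of received symbols needed to decode a random binary linear (n,k) code, whose distribution is P(M_n = k+i) = 2^{−i} ∏_{j=i+1}^{d} (1 − 2^{−j}) for 0 ≤ i ≤ d.) -/

import Mathlib

open Filter

/-- The Erdős–Borwein constant `c₀ = ∑_{i=1}^{∞} 1/(2^i − 1)`. -/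
noncomputable def c₀ : ℝ := ∑' i : ℕ, 1 / ((2 : ℝ) ^ (i + 1) - 1)

namespace MeanDecodingAux

/-- Tail product `∏_{j=i+1}^{d} (1 - 2^{-j})`. -/
noncomputable def F (i d : ℕ) : ℝ := ∏ j ∈ Finset.Icc (i + 1) d, (1 - (2 : ℝ)⁻¹ ^ j)

/-- Window product `∏_{j=i+1}^{i+m} (1 - 2^{-j})`. -/
noncomputable def Cc (m i : ℕ) : ℝ := ∏ j ∈ Finset.Icc (i + 1) (i + m), (1 - (2 : ℝ)⁻¹ ^ j)

/-- `T d = ∑_{i<d} (1 - F i d)`. -/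
noncomputable def T (d : ℕ) : ℝ := ∑ i ∈ Finset.range d, (1 - F i d)

/-- `H m = ∑'_i (1 - Cc m i)`. -/
noncomputable def H (m : ℕ) : ℝ := ∑' i : ℕ, (1 - Cc m i)

lemma factor_nonneg (j : ℕ) : (0 : ℝ) ≤ 1 - (2 : ℝ)⁻¹ ^ j := by
  have : (2 : ℝ)⁻¹ ^ j ≤ 1 := pow_le_one₀ (by norm_num) (by norm_num)
  linarith

lemma factor_le_one (j : ℕ) : 1 - (2 : ℝ)⁻¹ ^ j ≤ 1 := by
  have : (0 : ℝ) ≤ (2 : ℝ)⁻¹ ^ j := by positivity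
  linarith

lemma prod_anti {s t : Finset ℕ} (h : s ⊆ t) :
    ∏ j ∈ t, (1 - (2 : ℝ)⁻¹ ^ j) ≤ ∏ j ∈ s, (1 - (2 : ℝ)⁻¹ ^ j) := by
  rw [← Finset.prod_sdiff h]
  have h1 : ∏ j ∈ t \ s, (1 - (2 : ℝ)⁻¹ ^ j) ≤ 1 :=
    Finset.prod_le_one (fun i _ => factor_nonneg i) (fun i _ => factor_le_one i)
  have h2 : (0 : ℝ) ≤ ∏ j ∈ s, (1 - (2 : ℝ)⁻¹ ^ j) :=
    Finset.prod_nonneg fun i _ => factor_nonneg i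
  nlinarith [Finset.prod_nonneg (fun i (_ : i ∈ t \ s) => factor_nonneg i)]

lemma prod_nonneg' (s : Finset ℕ) : (0 : ℝ) ≤ ∏ j ∈ s, (1 - (2 : ℝ)⁻¹ ^ j) :=
  Finset.prod_nonneg fun i _ => factor_nonneg i

lemma prod_le_one' (s : Finset ℕ) : ∏ j ∈ s, (1 - (2 : ℝ)⁻¹ ^ j) ≤ 1 :=
  Finset.prod_le_one (fun i _ => factor_nonneg i) (fun i _ => factor_le_one i)

/-- Weierstrass-type bound: `1 - ∏ (1 - aⱼ) ≤ ∑ aⱼ`. -/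
lemma one_sub_prod_le (s : Finset ℕ) :
    1 - ∏ j ∈ s, (1 - (2 : ℝ)⁻¹ ^ j) ≤ ∑ j ∈ s, (2 : ℝ)⁻¹ ^ j := by
  classical
  induction s using Finset.induction_on with
  | empty => simp
  | @insert a s ha ih =>
    rw [Finset.prod_insert ha, Finset.sum_insert ha]
    have hP0 := prod_nonneg' s
    have hP1 := prod_le_one' s
    have hr0 : (0 : ℝ) ≤ (2 : ℝ)⁻¹ ^ a := by positivity
    nlinarith

lemma sum_Icc_pow (i m : ℕ) :
    ∑ j ∈ Finset.Icc (i + 1) (i + m), (2 : ℝ)⁻¹ ^ j = (2 : ℝ)⁻¹ ^ i - (2 : ℝ)⁻¹ ^ (i + m) := by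
  induction m with
  | zero => simp
  | succ m ih =>
    rw [show i + (m + 1) = (i + m) + 1 from rfl, Finset.sum_Icc_succ_top (by omega), ih, pow_succ]
    ring

lemma Cc_nonneg (m i : ℕ) : (0 : ℝ) ≤ Cc m i := prod_nonneg' _

lemma Cc_le_one (m i : ℕ) : Cc m i ≤ 1 := prod_le_one' _

lemma one_sub_Cc_le (m i : ℕ) : 1 - Cc m i ≤ (2 : ℝ)⁻¹ ^ i := by
  have h := one_sub_prod_le (Finset.Icc (i + 1) (i + m))
  rw [sum_Icc_pow] at h
  have : (0 : ℝ) ≤ (2 : ℝ)⁻¹ ^ (i + m) := by positivity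
  unfold Cc
  linarith

lemma summable_g (m : ℕ) : Summable (fun i : ℕ => 1 - Cc m i) :=
  Summable.of_nonneg_of_le (fun i => by linarith [Cc_le_one m i]) (fun i => one_sub_Cc_le m i)
    (summable_geometric_of_lt_one (by norm_num) (by norm_num))

lemma Cc_zero (i : ℕ) : Cc 0 i = 1 := by
  unfold Cc
  rw [Finset.Icc_eq_empty (by omega), Finset.prod_empty]

lemma Cc_zero_rec (m : ℕ) :
    Cc (m + 1) 0 = (1 - (2 : ℝ)⁻¹ ^ (m + 1)) * Cc m 0 := by
  unfold Cc
  rw [show 0 + (m + 1) = m + 1 from by omega, show (0 : ℕ) + m = m from by omega,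
    Finset.prod_Icc_succ_top (by omega)]
  ring

lemma Cc_rec (m i : ℕ) :
    Cc (m + 1) (i + 1) =
      (2 : ℝ)⁻¹ ^ (m + 1) * Cc (m + 1) i + (1 - (2 : ℝ)⁻¹ ^ (m + 1)) * Cc m (i + 1) := by
  have hP : Cc m (i + 1) = ∏ j ∈ Finset.Icc (i + 2) (i + m + 1), (1 - (2 : ℝ)⁻¹ ^ j) := by
    unfold Cc
    rw [show i + 1 + 1 = i + 2 from rfl, show i + 1 + m = i + m + 1 from by omega]
  have hL : Cc (m + 1) (i + 1) =
      (∏ j ∈ Finset.Icc (i + 2) (i + m + 1), (1 - (2 : ℝ)⁻¹ ^ j)) *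
        (1 - (2 : ℝ)⁻¹ ^ (i + m + 2)) := by
    unfold Cc
    rw [show i + 1 + (m + 1) = (i + m + 1) + 1 from by omega,
      show i + 1 + 1 = i + 2 from rfl, Finset.prod_Icc_succ_top (by omega)]
  have hM : Cc (m + 1) i =
      (1 - (2 : ℝ)⁻¹ ^ (i + 1)) * ∏ j ∈ Finset.Icc (i + 2) (i + m + 1), (1 - (2 : ℝ)⁻¹ ^ j) := by
    unfold Cc
    rw [show i + (m + 1) = i + m + 1 from by omega,
      ← Finset.Ioc_insert_left (show i + 1 ≤ i + m + 1 from by omega),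
      Finset.prod_insert (by simp), ← Finset.Icc_add_one_left_eq_Ioc]
    rfl
  have hpow : (2 : ℝ)⁻¹ ^ (m + 1) * (2 : ℝ)⁻¹ ^ (i + 1) = (2 : ℝ)⁻¹ ^ (i + m + 2) := by
    rw [← pow_add]
    congr 1
    omega
  rw [hL, hM, hP]
  linear_combination (∏ j ∈ Finset.Icc (i + 2) (i + m + 1), (1 - (2 : ℝ)⁻¹ ^ j)) * hpow

lemma H_zero : H 0 = 0 := by
  unfold H
  simp [Cc_zero]

lemma H_succ (m : ℕ) : H (m + 1) = H m + 1 / ((2 : ℝ) ^ (m + 1) - 1) := by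
  set a : ℝ := (2 : ℝ)⁻¹ ^ (m + 1) with ha
  have ha0 : 0 < a := by positivity
  have ha1 : a < 1 := by
    rw [ha]
    exact pow_lt_one₀ (by norm_num) (by norm_num) (by omega)
  set φ : ℕ → ℝ := fun n => Nat.rec (motive := fun _ => ℝ) 1 (fun i _ => 1 - Cc (m + 1) i) n
    with hφdef
  have hφ0 : φ 0 = 1 := rfl
  have hφs : ∀ i, φ (i + 1) = 1 - Cc (m + 1) i := fun i => rfl
  have hφsum : Summable φ := by
    refine (summable_nat_add_iff 1).1 ?_
    simpa [hφs] using summable_g (m + 1)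
  have hkey : ∀ i, 1 - Cc (m + 1) i = a * φ i + (1 - a) * (1 - Cc m i) := by
    intro i
    cases i with
    | zero => rw [hφ0, Cc_zero_rec]; ring
    | succ i => rw [hφs, Cc_rec m i]; ring
  have h1 : H (m + 1) = a * (∑' i, φ i) + (1 - a) * H m := by
    unfold H
    rw [tsum_congr hkey, Summable.tsum_add (hφsum.mul_left a) ((summable_g m).mul_left (1 - a)),
      tsum_mul_left, tsum_mul_left]
  have h2 : (∑' i, φ i) = 1 + H (m + 1) := by
    rw [Summable.tsum_eq_zero_add hφsum, hφ0]
    unfold H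
    congr 1
  rw [h2] at h1
  have hne : 1 - a ≠ 0 := by linarith
  have h3 : H (m + 1) = H m + a / (1 - a) := by
    field_simp at h1 ⊢
    linarith
  rw [h3]
  congr 1
  have h2pow : (0 : ℝ) < (2 : ℝ) ^ (m + 1) := by positivity
  have h2pow1 : (1 : ℝ) < (2 : ℝ) ^ (m + 1) := one_lt_pow₀ (by norm_num) (by omega)
  rw [ha, inv_pow]
  field_simp

lemma H_eq (m : ℕ) : H m = ∑ i ∈ Finset.range m, 1 / ((2 : ℝ) ^ (i + 1) - 1) := by
  induction m with
  | zero => simp [H_zero]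
  | succ m ih => rw [H_succ, ih, Finset.sum_range_succ]

lemma summable_c : Summable (fun i : ℕ => 1 / ((2 : ℝ) ^ (i + 1) - 1)) := by
  refine Summable.of_nonneg_of_le (fun i => ?_) (fun i => ?_)
    (summable_geometric_of_lt_one (show (0:ℝ) ≤ 2⁻¹ by norm_num) (by norm_num))
  · have : (1 : ℝ) < (2 : ℝ) ^ (i + 1) := one_lt_pow₀ (by norm_num) (by omega)
    exact le_of_lt (one_div_pos.2 (by linarith))
  · have h1 : (1 : ℝ) ≤ (2 : ℝ) ^ i := one_le_pow₀ (by norm_num)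
    have h2 : (2 : ℝ) ^ i ≤ (2 : ℝ) ^ (i + 1) - 1 := by
      rw [pow_succ]; nlinarith
    have h3 : (0 : ℝ) < (2 : ℝ) ^ i := by positivity
    rw [inv_pow, ← one_div]
    exact one_div_le_one_div_of_le h3 h2

lemma c_nonneg (i : ℕ) : (0 : ℝ) ≤ 1 / ((2 : ℝ) ^ (i + 1) - 1) := by
  have : (1 : ℝ) < (2 : ℝ) ^ (i + 1) := one_lt_pow₀ (by norm_num) (by omega)
  exact le_of_lt (one_div_pos.2 (by linarith))

lemma H_tendsto : Tendsto H atTop (nhds c₀) := by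
  have := summable_c.hasSum.tendsto_sum_nat
  have heq : (fun n : ℕ => ∑ i ∈ Finset.range n, 1 / ((2 : ℝ) ^ (i + 1) - 1)) = H :=
    funext fun m => (H_eq m).symm
  rw [heq] at this
  exact this

lemma H_le (m : ℕ) : H m ≤ c₀ := by
  rw [H_eq]
  exact Summable.sum_le_tsum (Finset.range m) (fun i _ => c_nonneg i) summable_c

lemma F_nonneg (i d : ℕ) : (0 : ℝ) ≤ F i d := prod_nonneg' _

lemma F_le_one (i d : ℕ) : F i d ≤ 1 := prod_le_one' _

lemma Cc_le_F (i d : ℕ) : Cc d i ≤ F i d :=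
  prod_anti (Finset.Icc_subset_Icc_right (by omega))

lemma F_le_Cc (i d m : ℕ) (h : i + m ≤ d) : F i d ≤ Cc m i :=
  prod_anti (Finset.Icc_subset_Icc_right h)

lemma T_le (d : ℕ) : T d ≤ c₀ := by
  have h1 : T d ≤ ∑ i ∈ Finset.range d, (1 - Cc d i) :=
    Finset.sum_le_sum fun i _ => by linarith [Cc_le_F i d]
  have h2 : ∑ i ∈ Finset.range d, (1 - Cc d i) ≤ H d :=
    Summable.sum_le_tsum (Finset.range d) (fun i _ => by linarith [Cc_le_one d i]) (summable_g d)
  linarith [H_le d]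

lemma T_lower (m d : ℕ) (hm : 1 ≤ m) (hmd : m ≤ d) : H m - (2 : ℝ)⁻¹ ^ (d - m) ≤ T d := by
  set N : ℕ := d - m + 1 with hN
  have hNd : N ≤ d := by omega
  have step1 : ∑ i ∈ Finset.range N, (1 - Cc m i) ≤ T d := by
    have h1 : ∑ i ∈ Finset.range N, (1 - Cc m i) ≤ ∑ i ∈ Finset.range N, (1 - F i d) := by
      refine Finset.sum_le_sum fun i hi => ?_
      have : i + m ≤ d := by
        have := Finset.mem_range.1 hi
        omega
      linarith [F_le_Cc i d m this]
    have h2 : ∑ i ∈ Finset.range N, (1 - F i d) ≤ T d := by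
      refine Finset.sum_le_sum_of_subset_of_nonneg
        (Finset.range_subset_range.2 hNd) fun i _ _ => ?_
      linarith [F_le_one i d]
    linarith
  have step2 : H m ≤ ∑ i ∈ Finset.range N, (1 - Cc m i) + (2 : ℝ)⁻¹ ^ (d - m) := by
    have hsplit := Summable.sum_add_tsum_nat_add (f := fun i => 1 - Cc m i) N (summable_g m)
    have htail : (∑' i : ℕ, (1 - Cc m (i + N))) ≤ (2 : ℝ)⁻¹ ^ (d - m) := by
      have hb : ∀ i : ℕ, 1 - Cc m (i + N) ≤ (2 : ℝ)⁻¹ ^ (i + N) := fun i => one_sub_Cc_le m _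
      have hsum2 : Summable (fun i : ℕ => (2 : ℝ)⁻¹ ^ (i + N)) := by
        simp_rw [pow_add]
        exact (summable_geometric_of_lt_one (by norm_num) (by norm_num)).mul_right _
      have := Summable.tsum_le_tsum hb ((summable_g m).comp_injective (add_left_injective N)) hsum2
      refine this.trans ?_
      have : (∑' i : ℕ, (2 : ℝ)⁻¹ ^ (i + N)) = (2 : ℝ)⁻¹ ^ N * 2 := by
        simp_rw [pow_add]
        rw [tsum_mul_right, tsum_geometric_of_lt_one (by norm_num) (by norm_num)]
        norm_num
        ring
      rw [this, hN, pow_succ]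
      ring_nf
      nlinarith [pow_nonneg (show (0:ℝ) ≤ 2⁻¹ by norm_num) (d - m)]
    unfold H
    rw [← hsplit]
    linarith
  linarith

lemma T_tendsto : Tendsto T atTop (nhds c₀) := by
  have hdiv : Tendsto (fun d : ℕ => d / 2) atTop atTop :=
    tendsto_atTop_atTop.mpr fun b => ⟨2 * b, fun a ha => by omega⟩
  have hsub : Tendsto (fun d : ℕ => d - d / 2) atTop atTop :=
    tendsto_atTop_atTop.mpr fun b => ⟨2 * b, fun a ha => by omega⟩
  have htail : Tendsto (fun d : ℕ => (2 : ℝ)⁻¹ ^ (d - d / 2)) atTop (nhds 0) :=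
    (tendsto_pow_atTop_nhds_zero_of_lt_one (by norm_num) (by norm_num)).comp hsub
  have hlow : Tendsto (fun d : ℕ => H (d / 2) - (2 : ℝ)⁻¹ ^ (d - d / 2)) atTop (nhds c₀) := by
    have := (H_tendsto.comp hdiv).sub htail
    simpa using this
  refine tendsto_of_tendsto_of_tendsto_of_le_of_le' hlow tendsto_const_nhds ?_ ?_
  · filter_upwards [eventually_ge_atTop 2] with d hd
    exact T_lower (d / 2) d (by omega) (by omega)
  · filter_upwards with d
    exact T_le d

lemma S_eq (k : ℕ) (d : ℕ) :
    ∑ i ∈ Finset.range (d + 1), ((k : ℝ) + (i : ℝ)) * (2 : ℝ)⁻¹ ^ i * F i d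
      = (k : ℝ) + T d := by
  induction d with
  | zero =>
    rw [Finset.sum_range_one]
    unfold F T
    rw [Finset.Icc_eq_empty (by omega), Finset.prod_empty]
    simp
  | succ d ih =>
    set a : ℝ := (2 : ℝ)⁻¹ ^ (d + 1) with ha
    have hF : ∀ i, i ≤ d → F i (d + 1) = F i d * (1 - a) := by
      intro i hi
      unfold F
      rw [Finset.prod_Icc_succ_top (by omega)]
    have hFd1 : F (d + 1) (d + 1) = 1 := by
      unfold F
      rw [Finset.Icc_eq_empty (by omega), Finset.prod_empty]
    have hFdd : F d d = 1 := by
      unfold F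
      rw [Finset.Icc_eq_empty (by omega), Finset.prod_empty]
    rw [Finset.sum_range_succ, hFd1]
    have hsum : ∑ i ∈ Finset.range (d + 1), ((k : ℝ) + (i : ℝ)) * (2 : ℝ)⁻¹ ^ i * F i (d + 1)
        = (∑ i ∈ Finset.range (d + 1), ((k : ℝ) + (i : ℝ)) * (2 : ℝ)⁻¹ ^ i * F i d) * (1 - a) := by
      rw [Finset.sum_mul]
      refine Finset.sum_congr rfl fun i hi => ?_
      rw [hF i (Nat.lt_succ_iff.1 (Finset.mem_range.1 hi))]
      ring
    have hT : T (d + 1) = (1 - a) * T d + ((d : ℝ) + 1) * a := by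
      unfold T
      have h1 : ∀ i ∈ Finset.range (d + 1), 1 - F i (d + 1) = (1 - F i d) * (1 - a) + a := by
        intro i hi
        rw [hF i (Nat.lt_succ_iff.1 (Finset.mem_range.1 hi))]
        ring
      rw [Finset.sum_congr rfl h1, Finset.sum_add_distrib, Finset.sum_const, ← Finset.sum_mul,
        Finset.sum_range_succ, hFdd]
      simp only [Finset.card_range, nsmul_eq_mul]
      push_cast
      ring
    rw [hsum, ih, hT]
    push_cast
    ring

end MeanDecodingAux

/-- `lim_{d→∞} ∑_{i=0}^{d} (k + i) · 2^{−i} · ∏_{j=i+1}^{d} (1 − 2^{−j}) = k + c₀`: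
the limiting expected number of received symbols needed to decode a random binary
linear code equals `k + c₀`. -/
theorem mean_decoding_time_limit (k : ℕ) :
    Tendsto
      (fun d : ℕ => ∑ i ∈ Finset.range (d + 1),
        ((k : ℝ) + (i : ℝ)) * (2 : ℝ) ^ (-(i : ℤ)) *
          ∏ j ∈ Finset.Icc (i + 1) d, (1 - (2 : ℝ) ^ (-(j : ℤ))))
      atTop (nhds ((k : ℝ) + c₀)) := by
  have hconv : ∀ j : ℕ, (2 : ℝ) ^ (-(j : ℤ)) = (2 : ℝ)⁻¹ ^ j := by
    intro j
    rw [zpow_neg, zpow_natCast, inv_pow]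
  have key : ∀ d : ℕ, (∑ i ∈ Finset.range (d + 1),
      ((k : ℝ) + (i : ℝ)) * (2 : ℝ) ^ (-(i : ℤ)) *
        ∏ j ∈ Finset.Icc (i + 1) d, (1 - (2 : ℝ) ^ (-(j : ℤ))))
      = (k : ℝ) + MeanDecodingAux.T d := by
    intro d
    simp only [hconv]
    have := MeanDecodingAux.S_eq k d
    unfold MeanDecodingAux.F at this
    exact this
  simp only [key]
  exact Filter.Tendsto.const_add _ MeanDecodingAux.T_tendsto
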